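/- Every metric space is left-separated if and only if it is σ-discrete. -/

import Mathlib

/-- A topological space is left-separated if it carries a well-ordering all of
whose initial segments are closed. -/
def LeftSeparated (X : Type*) [TopologicalSpace X] : Prop :=
  ∃ r : X → X → Prop, IsWellOrder X r ∧ ∀ x : X, IsClosed {y : X | r y x}

/-- Every subset of a uniformly separated set in a metric space is closed. -/
lemma sep_closed {X : Type*} [MetricSpace X] {s : Set X} {ε : ℝ} (hε : 0 < ε)
    (hs : ∀ a ∈ s, ∀ b ∈ s, a ≠ b → ε ≤ dist a b) {t : Set X} (hts : t ⊆ s) :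
    IsClosed t := by
  rw [← closure_subset_iff_isClosed]
  intro x hx
  obtain ⟨y, hyt, hxy⟩ := Metric.mem_closure_iff.1 hx (ε / 2) (by linarith)
  rcases eq_or_ne x y with rfl | hne
  · exact hyt
  · exfalso
    have hdxy : 0 < dist x y := dist_pos.2 hne
    obtain ⟨z, hzt, hxz⟩ := Metric.mem_closure_iff.1 hx (min (dist x y) (ε / 2))
      (lt_min hdxy (by linarith))
    have hzy : z ≠ y := by
      intro h; subst h
      exact absurd (lt_of_lt_of_le hxz (min_le_left _ _)) (lt_irrefl _)
    have := hs z (hts hzt) y (hts hyt) hzy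
    have h1 : dist x z < ε / 2 := lt_of_lt_of_le hxz (min_le_right _ _)
    have h2 : dist z y ≤ dist z x + dist x y := dist_triangle _ _ _
    rw [dist_comm z x] at h2
    linarith

/-- A uniformly separated set in a metric space is discrete. -/
lemma sep_discrete {X : Type*} [MetricSpace X] {s : Set X} {ε : ℝ} (hε : 0 < ε)
    (hs : ∀ a ∈ s, ∀ b ∈ s, a ≠ b → ε ≤ dist a b) :
    DiscreteTopology s := by
  rw [discreteTopology_subtype_iff]
  intro x hx
  rw [← Filter.empty_mem_iff_bot, Filter.mem_inf_iff]
  refine ⟨{x}ᶜ ∩ Metric.ball x ε, inter_mem_nhdsWithin _ (Metric.ball_mem_nhds x hε),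
    s, Filter.mem_principal_self _, ?_⟩
  ext y
  simp only [Set.mem_empty_iff_false, Set.mem_inter_iff, Metric.mem_ball, Set.mem_compl_iff,
    Set.mem_singleton_iff, false_iff]
  rintro ⟨⟨hy2, hy1⟩, hy3⟩
  rw [dist_comm] at hy1
  exact absurd hy1 (not_lt.2 (hs x hx y hy3 (fun h => hy2 h.symm)))

/- STATEMENT 4: A metric space is left-separated iff it is σ-discrete. -/
theorem stmt_4 {X : Type*} [MetricSpace X] :
    LeftSeparated X ↔
      ∃ D : ℕ → Set X, (∀ n, DiscreteTopology (D n)) ∧ ⋃ n, D n = Set.univ := by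
  constructor
  · rintro ⟨r, hwo, hcl⟩
    refine ⟨fun n => {x | ∀ y, r y x → 1 / (n + 1 : ℝ) ≤ dist x y}, fun n => ?_, ?_⟩
    · refine sep_discrete (ε := 1 / (n + 1 : ℝ)) (by positivity) ?_
      intro a ha b hb hab
      rcases (haveI := hwo; trichotomous_of r a b) with h | h | h
      · rw [dist_comm]; exact hb a h
      · exact absurd h hab
      · exact ha b h
    · ext x
      simp only [Set.mem_iUnion, Set.mem_univ, iff_true, Set.mem_setOf_eq]
      have hx : x ∉ closure {y | r y x} := by
        rw [(hcl x).closure_eq]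
        haveI := hwo
        exact fun h => irrefl_of r x h
      rw [Metric.mem_closure_iff] at hx
      push_neg at hx
      obtain ⟨ε, hε, hεs⟩ := hx
      obtain ⟨n, hn⟩ := exists_nat_one_div_lt hε
      exact ⟨n, fun y hy => le_trans hn.le (hεs y hy)⟩
  · rintro ⟨D, hdisc, hcov⟩
    classical
    -- refine to uniformly separated sets
    set C : ℕ → Set X := fun m =>
      {x ∈ D (Nat.pairEquiv.symm m).1 | ∀ y ∈ D (Nat.pairEquiv.symm m).1, y ≠ x →
        1 / ((Nat.pairEquiv.symm m).2 + 1 : ℝ) ≤ dist x y} with hC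
    have hCsep : ∀ m, ∀ a ∈ C m, ∀ b ∈ C m, a ≠ b →
        1 / ((Nat.pairEquiv.symm m).2 + 1 : ℝ) ≤ dist a b := by
      rintro m a ⟨haD, haS⟩ b ⟨hbD, _⟩ hab
      exact haS b hbD (Ne.symm hab)
    have hεpos : ∀ m : ℕ, (0:ℝ) < 1 / ((Nat.pairEquiv.symm m).2 + 1 : ℝ) := by
      intro m; positivity
    have hm : ∀ x : X, ∃ m, x ∈ C m := by
      intro x
      have hxU : x ∈ ⋃ n, D n := hcov ▸ Set.mem_univ x
      obtain ⟨n, hn⟩ := Set.mem_iUnion.1 hxU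
      -- use discreteness of D n to get a separating radius at x
      have := discreteTopology_subtype_iff.1 (hdisc n) x hn
      rw [← Filter.empty_mem_iff_bot, Filter.mem_inf_iff] at this
      obtain ⟨s, hs, t, ht, hst⟩ := this
      rw [Metric.mem_nhdsWithin_iff] at hs
      obtain ⟨ε, hε, hεs⟩ := hs
      obtain ⟨k, hk⟩ := exists_nat_one_div_lt hε
      refine ⟨Nat.pairEquiv (n, k), ?_⟩
      have hnk : Nat.pairEquiv.symm (Nat.pairEquiv (n, k)) = (n, k) :=
        Nat.pairEquiv.symm_apply_apply (n, k)
      rw [hC]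
      simp only [Set.mem_setOf_eq, hnk]
      refine ⟨hn, fun y hy hyx => ?_⟩
      by_contra hlt
      push_neg at hlt
      have hyball : y ∈ Metric.ball x ε ∩ {x}ᶜ := by
        constructor
        · rw [Metric.mem_ball, dist_comm]
          exact lt_trans hlt hk
        · exact hyx
      have hyt : y ∈ t := Filter.mem_principal.1 ht hy
      have : y ∈ (∅ : Set X) := hst ▸ ⟨hεs hyball, hyt⟩
      exact this.elim
    -- define the well-order
    set mx : X → ℕ := fun x => Nat.find (hm x) with hmx
    have hmxC : ∀ x, x ∈ C (mx x) := fun x => Nat.find_spec (hm x)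
    set r : X → X → Prop := fun a b =>
      Prod.Lex (· < ·) (@WellOrderingRel X) (mx a, a) (mx b, b) with hr
    have hwo : IsWellOrder X r := by
      have f : r ↪r Prod.Lex (· < ·) (@WellOrderingRel X) :=
        ⟨⟨fun a => (mx a, a), fun a b h => congrArg Prod.snd h⟩, Iff.rfl⟩
      exact f.isWellOrder
    refine ⟨r, hwo, fun x => ?_⟩
    have hseg : {y | r y x} =
        (⋃ j ∈ Set.Iio (mx x), {y | mx y = j}) ∪
          {y | mx y = mx x ∧ WellOrderingRel y x} := by
      ext y
      simp only [hr, Prod.lex_def, Set.mem_setOf_eq, Set.mem_union, Set.mem_iUnion,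
        Set.mem_Iio, exists_prop]
      constructor
      · rintro (h | h)
        · exact Or.inl ⟨mx y, h, rfl⟩
        · exact Or.inr h
      · rintro (⟨j, hj, rfl⟩ | h)
        · exact Or.inl hj
        · exact Or.inr h
    rw [hseg]
    refine IsClosed.union ?_ ?_
    · refine Set.Finite.isClosed_biUnion (Set.finite_Iio _) (fun j _ => ?_)
      refine sep_closed (hεpos j) (hCsep j) ?_
      intro y hy
      rw [Set.mem_setOf_eq] at hy
      exact hy ▸ hmxC y
    · refine sep_closed (hεpos (mx x)) (hCsep (mx x)) ?_
      rintro y ⟨hy, _⟩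
      exact hy ▸ hmxC y
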